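/- Define B_1 = 1 and for n > 1, B_n = Σ_{k=0}^{n-1} (k/(n-1))·binomial(2n-k-3, n-k-1)·C_k, where C_k is the k-th Catalan number. Then the composition of Catalan generating functions satisfies Y(q·Y(q)) = Σ_{n>0} B_n q^{n-1}, where Y(q) = Σ_{n≥0} C_n q^n. -/

import Mathlib

/-- Planar binary trees. -/
inductive PBTree : Type
  | leaf : PBTree
  | node : PBTree → PBTree → PBTree
  deriving DecidableEq, Repr

namespace PBTree

instance : Inhabited PBTree := ⟨leaf⟩

/-- Number of internal nodes. -/
def size : PBTree → ℕ
  | leaf => 0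
  | node l r => l.size + r.size + 1

/-- Number of leaves. -/
def nleaves : PBTree → ℕ
  | leaf => 1
  | node l r => l.nleaves + r.nleaves

end PBTree

/-- Planar binary trees with `Bool`-labelled internal nodes; a label `true` means the
node belongs to the distinguished upper order ideal.  Bi-leveled trees are the labelled
trees satisfying `isBL` below. -/
inductive LTree : Type
  | leaf : LTree
  | node : LTree → Bool → LTree → LTree
  deriving DecidableEq, Repr

namespace LTree

instance : Inhabited LTree := ⟨leaf⟩

def size : LTree → ℕ
  | leaf => 0
  | node l _ r => l.size + r.size + 1

def nleaves : LTree → ℕ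
  | leaf => 1
  | node l _ r => l.nleaves + r.nleaves

/-- Forget the labels. -/
def forget : LTree → PBTree
  | leaf => PBTree.leaf
  | node l _ r => PBTree.node l.forget r.forget

/-- All labels are `false`. -/
def allFalse : LTree → Bool
  | leaf => true
  | node l b r => !b && l.allFalse && r.allFalse

/-- The set of `true` nodes forms an upper order ideal of the node poset
(each node is below its parent; the root is maximal). -/
def isUpperIdeal : LTree → Bool
  | leaf => true
  | node l b r => if b then l.isUpperIdeal && r.isUpperIdeal else l.allFalse && r.allFalse

/-- The leftmost node is labelled `true` and is a minimal element of the ideal,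
i.e. its descendants are all labelled `false`.  (Vacuously true for the empty tree.) -/
def leftmostMin : LTree → Bool
  | leaf => true
  | node leaf b r => b && r.allFalse
  | node l _ _ => leftmostMin l

/-- `b` is a bi-leveled tree: the `true` nodes form an upper order ideal containing
the leftmost node as a minimal element. -/
def isBL (b : LTree) : Prop := b.isUpperIdeal = true ∧ b.leftmostMin = true

end LTree

/-- The number of bi-leveled trees with `n` (internal) nodes. -/
noncomputable def blCount (n : ℕ) : ℕ :=
  {b : LTree | LTree.isBL b ∧ b.size = n}.ncard

open PowerSeries

/-- Composition of formal power series (valid when `g` has zero constant term):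
the `N`-th coefficient of `f ∘ g` is `∑_{n ≤ N} f_n · [q^N](g^n)`. -/
noncomputable def psComp (f g : PowerSeries ℚ) : PowerSeries ℚ :=
  PowerSeries.mk fun N => ∑ n ∈ Finset.range (N + 1),
    (PowerSeries.coeff n f) * PowerSeries.coeff N (g ^ n)

/-- The Catalan generating function `Y(q) = ∑ C_n q^n`. -/
noncomputable def Yser : PowerSeries ℚ := PowerSeries.mk fun n => (catalan n : ℚ)

/-- The generating function `M(q) = ∑ A_n q^n` of bi-leveled trees. -/
noncomputable def Mser : PowerSeries ℚ := PowerSeries.mk fun n => (blCount n : ℚ)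

/-- The numbers `B n`: `B 1 = 1` and for `n > 1`,
`B n = ∑_{k=0}^{n-1} (k/(n-1)) · C(2n-k-3, n-k-1) · C_k`. -/
noncomputable def Bnum : ℕ → ℚ := fun n =>
  if n = 1 then 1
  else if 2 ≤ n then
    ∑ k ∈ Finset.range n,
      ((k : ℚ) / ((n : ℚ) - 1)) * (Nat.choose (2 * n - k - 3) (n - k - 1) : ℚ) * (catalan k : ℚ)
  else 0

lemma Yser_eq : Yser = 1 + PowerSeries.X * Yser ^ 2 := by
  ext n
  cases n with
  | zero => simp [Yser]
  | succ n =>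
      rw [map_add, PowerSeries.coeff_succ_X_mul]
      simp only [Yser, PowerSeries.coeff_mk, sq, PowerSeries.coeff_mul,
        PowerSeries.coeff_one, Nat.succ_ne_zero, if_false, zero_add]
      rw [catalan_succ']
      push_cast
      rfl

lemma Yser_pow_rec (k : ℕ) :
    Yser ^ (k + 1) = Yser ^ k + PowerSeries.X * Yser ^ (k + 2) := by
  calc Yser ^ (k + 1) = Yser ^ k * (1 + PowerSeries.X * Yser ^ 2) := by
        rw [← Yser_eq, pow_succ]
    _ = Yser ^ k + PowerSeries.X * Yser ^ (k + 2) := by ring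

lemma coeff_Yser_pow : ∀ j k : ℕ, (PowerSeries.coeff j) (Yser ^ k) =
    (Nat.choose (2 * j + k - 1) j : ℚ) -
      (if j = 0 then 0 else (Nat.choose (2 * j + k - 1) (j - 1) : ℚ)) := by
  intro j
  induction j with
  | zero =>
      intro k
      simp only [PowerSeries.coeff_zero_eq_constantCoeff, map_pow]
      have : PowerSeries.constantCoeff Yser = 1 := by
        simp [Yser, ← PowerSeries.coeff_zero_eq_constantCoeff]
      simp [this]
  | succ j ihj =>
      intro k
      induction k with
      | zero =>
          have h1 : 2 * (j + 1) + 0 - 1 = 2 * j + 1 := by omega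
          have h2 : (2 * j + 1).choose (j + 1) = (2 * j + 1).choose j := by
            have := Nat.choose_symm (n := 2 * j + 1) (k := j) (by omega)
            rwa [show 2 * j + 1 - j = j + 1 from by omega] at this
          rw [pow_zero, h1, if_neg (Nat.succ_ne_zero j), Nat.add_sub_cancel, h2]
          simp
      | succ k ihk =>
          rw [Yser_pow_rec, map_add, PowerSeries.coeff_succ_X_mul, ihk, ihj (k + 2)]
          have e1 : 2 * (j + 1) + (k + 1) - 1 = (2 * j + k + 1) + 1 := by omega
          have e2 : 2 * (j + 1) + k - 1 = 2 * j + k + 1 := by omega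
          have e3 : 2 * j + (k + 2) - 1 = 2 * j + k + 1 := by omega
          rw [e1, e2, e3]
          set n := 2 * j + k + 1 with hn
          rw [Nat.choose_succ_succ (n := n) (k := j)]
          rcases Nat.eq_zero_or_pos j with hj | hj
          · subst hj
            simp [Nat.choose_succ_succ]
          · have hj1 : j = (j - 1) + 1 := by omega
            simp only [if_neg (Nat.succ_ne_zero j), if_neg (by omega : j ≠ 0),
              Nat.add_sub_cancel]
            have hj2 : j - 1 + 1 = j := by omega
            have : (n + 1).choose j = n.choose (j - 1) + n.choose j := by
              rw [← hj2, Nat.choose_succ_succ]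
              simp only [Nat.succ_eq_add_one, hj2]
            rw [this]
            push_cast
            ring

/-- With `B 1 = 1` and `B n = ∑_{k=0}^{n-1} (k/(n-1))·C(2n-k-3,n-k-1)·C_k`
for `n > 1`, the composite Catalan series satisfies `Y(q·Y(q)) = ∑_{n>0} B_n q^{n-1}`. -/
theorem comp_catalan_eq_B :
    psComp Yser (PowerSeries.X * Yser) = PowerSeries.mk fun m => Bnum (m + 1) := by
  ext m
  rw [psComp]
  simp only [PowerSeries.coeff_mk]
  simp only [show ∀ n, PowerSeries.coeff n Yser = (catalan n : ℚ) from fun n => by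
    simp [Yser]]
  have hcoeff : ∀ k, k ∈ Finset.range (m + 1) →
      (PowerSeries.coeff m) ((PowerSeries.X * Yser) ^ k)
        = (PowerSeries.coeff (m - k)) (Yser ^ k) := by
    intro k hk
    rw [Finset.mem_range] at hk
    have hm : m = (m - k) + k := by omega
    rw [mul_pow]
    conv_lhs => rw [hm]
    rw [PowerSeries.coeff_X_pow_mul]
  rw [Finset.sum_congr rfl fun k hk => by rw [hcoeff k hk]]
  cases m with
  | zero =>
      rw [Finset.sum_range_one]
      simp [Bnum, pow_zero]
  | succ M =>
      have hM : (0 : ℕ) < M + 1 := Nat.succ_pos M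
      simp only [Bnum]
      rw [if_neg (by omega), if_pos (by omega)]
      apply Finset.sum_congr rfl
      intro k hk
      rw [Finset.mem_range] at hk
      have hkM : k ≤ M + 1 := by omega
      rw [coeff_Yser_pow]
      have e1 : 2 * (M + 1 - k) + k - 1 = 2 * (M + 1) - k - 1 := by omega
      have e2 : 2 * (M + 1 + 1) - k - 3 = 2 * (M + 1) - k - 1 := by omega
      have e3 : M + 1 + 1 - k - 1 = M + 1 - k := by omega
      rw [e1, e2, e3]
      have hMcast : ((M : ℚ) + 1 + 1) - 1 = (M + 1 : ℕ) := by push_cast; ring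
      push_cast [hMcast]
      rcases eq_or_lt_of_le hkM with hkeq | hklt
      · subst hkeq
        simp only [Nat.sub_self, if_pos rfl]
        have : 2 * (M + 1) - (M + 1) - 1 = M := by omega
        rw [this]
        simp [div_self (by positivity : ((M : ℚ) + 1) ≠ 0)]
      · rw [if_neg (by omega : ¬ M + 1 - k = 0)]
        set n := 2 * (M + 1) - k - 1 with hn
        have hid : n.choose (M + 1 - k) * (M + 1 - k) = n.choose (M + 1 - k - 1) * (M + 1) := by
          have h1 : M + 1 - k = (M + 1 - k - 1) + 1 := by omega
          have := Nat.choose_succ_right_eq n (M + 1 - k - 1)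
          rw [← h1] at this
          rw [this]
          congr 1
          omega
        have hidQ : (n.choose (M + 1 - k) : ℚ) * ((M : ℚ) + 1 - k) =
            (n.choose (M + 1 - k - 1) : ℚ) * ((M : ℚ) + 1) := by
          have := congrArg (Nat.cast : ℕ → ℚ) hid
          push_cast [Nat.cast_sub (by omega : k ≤ M + 1)] at this
          convert this using 2
        have hMne : ((M : ℚ) + 1) ≠ 0 := by positivity
        field_simp
        nlinarith [hidQ]
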